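/- Let W = {W(t)}_{t ∈ [0,1]} be a standard Brownian motion on a probability space (Ω,F,P): W(ω,0) = 0 for all ω; every sample path t ↦ W(ω,t) is continuous on [0,1]; for all 0 ≤ s ≤ t ≤ 1 the increment W(t) − W(s) has the Gaussian distribution with mean 0 and variance t − s; and for every finite sequence 0 ≤ t_0 ≤ t_1 ≤ … ≤ t_n ≤ 1 the increments W(t_1) − W(t_0), …, W(t_n) − W(t_{n−1}) are mutually independent. Then for every x > 0, P( sup_{t ∈ [0,1]} |W(t)| > x ) ≤ 4 · P( |W(1)| > x/2 ). -/

import Mathlib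

open MeasureTheory ProbabilityTheory Filter Set NNReal ENNReal Finset

lemma gauss_Iio_le_half (v : ℝ≥0) : gaussianReal 0 v (Set.Iio 0) ≤ 1/2 := by
  have hmap : (gaussianReal 0 v).map (((-1:ℝ)) * ·) = gaussianReal 0 v := by
    rw [gaussianReal_map_const_mul (-1)]
    norm_num
  have h1 : gaussianReal 0 v (Set.Iio 0) = gaussianReal 0 v (Set.Ioi 0) := by
    conv_lhs => rw [← hmap]
    rw [Measure.map_apply (by fun_prop) measurableSet_Iio]
    congr 1
    ext y
    simp only [Set.mem_preimage, Set.mem_Iio, Set.mem_Ioi]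
    constructor <;> intro h <;> nlinarith
  have h2 : gaussianReal 0 v (Set.Iio 0) + gaussianReal 0 v (Set.Ioi 0) ≤ 1 := by
    rw [← measure_union ((Set.Iio_disjoint_Ici le_rfl).mono_right Set.Ioi_subset_Ici_self) measurableSet_Ioi]
    exact prob_le_one
  rw [h1] at h2 ⊢
  rw [ENNReal.le_div_iff_mul_le (by norm_num) (by norm_num)]
  calc gaussianReal 0 v (Set.Ioi 0) * 2 = gaussianReal 0 v (Set.Ioi 0) + gaussianReal 0 v (Set.Ioi 0) := by ring
  _ ≤ 1 := h2

lemma gauss_Ioi_le_half (v : ℝ≥0) : gaussianReal 0 v (Set.Ioi 0) ≤ 1/2 := by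
  have hmap : (gaussianReal 0 v).map (((-1:ℝ)) * ·) = gaussianReal 0 v := by
    rw [gaussianReal_map_const_mul (-1)]
    norm_num
  have h1 : gaussianReal 0 v (Set.Iio 0) = gaussianReal 0 v (Set.Ioi 0) := by
    conv_lhs => rw [← hmap]
    rw [Measure.map_apply (by fun_prop) measurableSet_Iio]
    congr 1
    ext y
    simp only [Set.mem_preimage, Set.mem_Iio, Set.mem_Ioi]
    constructor <;> intro h <;> nlinarith
  rw [← h1]
  exact gauss_Iio_le_half v

lemma levy_aux {Ω : Type*} [MeasurableSpace Ω] (P : Measure Ω) [IsProbabilityMeasure P]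
    (N : ℕ) (X : Fin N → Ω → ℝ) (hm : ∀ i, Measurable (X i))
    (hi : iIndepFun X P)
    (hsym : ∀ k : ℕ,
      P {ω | (∑ i ∈ Finset.univ.filter (fun i : Fin N => k ≤ (i:ℕ)), X i ω) < 0} ≤ 1/2)
    (x : ℝ) :
    P {ω | ∃ k, k ≤ N ∧ x < ∑ i ∈ Finset.univ.filter (fun i : Fin N => (i:ℕ) < k), X i ω}
      ≤ 2 * P {ω | x < ∑ i, X i ω} := by
  classical
  set pS : ℕ → Ω → ℝ := fun k ω => ∑ i ∈ Finset.univ.filter (fun i : Fin N => (i:ℕ) < k), X i ω with hpS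
  set pT : ℕ → Ω → ℝ := fun k ω => ∑ i ∈ Finset.univ.filter (fun i : Fin N => k ≤ (i:ℕ)), X i ω with hpT
  have hmeasS : ∀ k, Measurable (pS k) := fun k => Finset.measurable_sum _ (fun i _ => hm i)
  have hmeasT : ∀ k, Measurable (pT k) := fun k => Finset.measurable_sum _ (fun i _ => hm i)
  have htot : ∀ k ω, pS k ω + pT k ω = ∑ i, X i ω := by
    intro k ω
    have h : (Finset.univ.filter fun i : Fin N => k ≤ (i:ℕ))
        = Finset.univ.filter fun i : Fin N => ¬ ((i:ℕ) < k) := by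
      ext i; simp [not_lt]
    simp only [hpS, hpT, h]
    exact Finset.sum_filter_add_sum_filter_not _ _ _
  set A : ℕ → Set Ω := fun k => {ω | x < pS k ω} ∩ {ω | ∀ j, j < k → pS j ω ≤ x} with hA
  have hAmeas : ∀ k, MeasurableSet (A k) := by
    intro k
    apply MeasurableSet.inter
    · exact measurableSet_lt measurable_const (hmeasS k)
    · have : {ω | ∀ j, j < k → pS j ω ≤ x} = ⋂ j ∈ Set.Iio k, {ω | pS j ω ≤ x} := by
        ext ω; simp
      rw [this]
      exact MeasurableSet.biInter (Set.to_countable _)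
        (fun j _ => measurableSet_le (hmeasS j) measurable_const)
  have hAdisj : ∀ k k', k ≠ k' → Disjoint (A k) (A k') := by
    intro k k' hkk'
    rcases lt_or_gt_of_ne hkk' with h | h
    · rw [Set.disjoint_left]
      rintro ω ⟨h1, _⟩ ⟨_, h2⟩
      exact absurd h1 (not_lt.mpr (h2 k h))
    · rw [Set.disjoint_left]
      rintro ω ⟨_, h2⟩ ⟨h1, _⟩
      exact absurd h1 (not_lt.mpr (h2 k' h))
  -- key independence step
  have key : ∀ k, P (A k) ≤ 2 * P (A k ∩ {ω | 0 ≤ pT k ω}) := by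
    intro k
    set S : Finset (Fin N) := Finset.univ.filter (fun i : Fin N => (i:ℕ) < k) with hS
    set T : Finset (Fin N) := Finset.univ.filter (fun i : Fin N => k ≤ (i:ℕ)) with hT
    have hST : Disjoint S T := by
      rw [Finset.disjoint_left]
      intro i hiS hiT
      simp only [hS, hT, Finset.mem_filter] at hiS hiT
      omega
    have hIF := hi.indepFun_finset S T hST hm
    -- sets
    set ps : ℕ → ((i : S) → ℝ) → ℝ :=
      fun j v => ∑ i : S, if ((i : Fin N) : ℕ) < j then v i else 0 with hps
    have hpsm : ∀ j, Measurable (ps j) := by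
      intro j
      apply Finset.measurable_sum
      intro i _
      by_cases h : ((i : Fin N) : ℕ) < j
      · simpa [h] using measurable_pi_apply i
      · simpa [h] using measurable_const
    set C : Set ((i : S) → ℝ) :=
      {v | x < ps k v} ∩ {v | ∀ j, j < k → ps j v ≤ x} with hC
    have hCmeas : MeasurableSet C := by
      apply MeasurableSet.inter
      · exact measurableSet_lt measurable_const (hpsm k)
      · have : {v : (i : S) → ℝ | ∀ j, j < k → ps j v ≤ x}
            = ⋂ j ∈ Set.Iio k, {v | ps j v ≤ x} := by ext v; simp
        rw [this]
        exact MeasurableSet.biInter (Set.to_countable _)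
          (fun j _ => measurableSet_le (hpsm j) measurable_const)
    set D : Set ((i : T) → ℝ) := {w | (∑ i : T, w i) < 0} with hD
    have hDmeas : MeasurableSet D :=
      measurableSet_lt (Finset.measurable_sum _ (fun i _ => measurable_pi_apply i))
        measurable_const
    -- translate preimages
    have hsum : ∀ (j : ℕ), j ≤ k → ∀ a : Ω, ps j (fun i : S => X i a) = pS j a := by
      intro j hj a
      show (∑ i : {y // y ∈ S}, if ((i : Fin N) : ℕ) < j then X (i : Fin N) a else 0)
          = ∑ i ∈ Finset.univ.filter (fun i : Fin N => (i:ℕ) < j), X i a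
      rw [Finset.sum_coe_sort S (fun b : Fin N => if (b:ℕ) < j then X b a else 0)]
      rw [Finset.sum_ite, Finset.sum_const_zero, add_zero]
      congr 1
      rw [hS, Finset.filter_filter]
      ext i
      simp only [Finset.mem_filter, Finset.mem_univ, true_and]
      omega
    have hpreC : (fun a (i : S) => X i a) ⁻¹' C = A k := by
      ext a
      simp only [hC, hA, Set.mem_preimage, Set.mem_inter_iff, Set.mem_setOf_eq]
      constructor
      · rintro ⟨h1, h2⟩
        exact ⟨by rwa [hsum k le_rfl a] at h1,
          fun j hj => by have := h2 j hj; rwa [hsum j hj.le a] at this⟩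
      · rintro ⟨h1, h2⟩
        exact ⟨by rwa [hsum k le_rfl a], fun j hj => by rw [hsum j hj.le a]; exact h2 j hj⟩
    have hpreD : (fun a (i : T) => X i a) ⁻¹' D = {ω | pT k ω < 0} := by
      ext a
      simp only [hD, hpT, Set.mem_preimage, Set.mem_setOf_eq]
      rw [Finset.sum_coe_sort T (fun i => X i a)]
    have hmul := hIF.measure_inter_preimage_eq_mul C D hCmeas hDmeas
    rw [hpreC, hpreD] at hmul
    -- split
    have hsplit : P (A k) = P (A k ∩ {ω | 0 ≤ pT k ω}) + P (A k ∩ {ω | pT k ω < 0}) := by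
      have hu : A k = (A k ∩ {ω | 0 ≤ pT k ω}) ∪ (A k ∩ {ω | pT k ω < 0}) := by
        ext ω
        by_cases h : 0 ≤ pT k ω
        · simp [h]
        · simp [h, lt_of_not_ge h]
      have hd : Disjoint (A k ∩ {ω | 0 ≤ pT k ω}) (A k ∩ {ω | pT k ω < 0}) := by
        apply Set.disjoint_left.mpr
        rintro ω ⟨_, h1⟩ ⟨_, h2⟩
        simp only [Set.mem_setOf_eq] at h1 h2
        exact absurd h1 (not_le.mpr h2)
      have hmeas2 : MeasurableSet (A k ∩ {ω | pT k ω < 0}) :=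
        (hAmeas k).inter (measurableSet_lt (hmeasT k) measurable_const)
      nth_rewrite 1 [hu]
      exact measure_union hd hmeas2
    have hbd : P (A k ∩ {ω | pT k ω < 0}) ≤ P (A k) * (1/2) := by
      rw [hmul]
      exact mul_le_mul_right (hsym k) _
    have h12 : ∀ a : ℝ≥0∞, 2 * (a * (1/2)) = a := by
      intro a
      have h2 : (2:ℝ≥0∞) * (1/2) = 1 := ENNReal.mul_div_cancel' (by norm_num) (by norm_num)
      rw [mul_comm a, ← mul_assoc, h2, one_mul]
    have h4 : P (A k) + P (A k) ≤ 2 * P (A k ∩ {ω | 0 ≤ pT k ω}) + P (A k) := by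
      calc P (A k) + P (A k) = 2 * P (A k) := (two_mul _).symm
      _ = 2 * (P (A k ∩ {ω | 0 ≤ pT k ω}) + P (A k ∩ {ω | pT k ω < 0})) := by rw [← hsplit]
      _ ≤ 2 * (P (A k ∩ {ω | 0 ≤ pT k ω}) + P (A k) * (1/2)) :=
          mul_le_mul_right (add_le_add_right hbd _) 2
      _ = 2 * P (A k ∩ {ω | 0 ≤ pT k ω}) + 2 * (P (A k) * (1/2)) := by ring
      _ = 2 * P (A k ∩ {ω | 0 ≤ pT k ω}) + P (A k) := by rw [h12]
    exact (ENNReal.add_le_add_iff_right (measure_ne_top P _)).mp h4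
  -- assemble
  have hcover : {ω | ∃ k, k ≤ N ∧ x < pS k ω} = ⋃ k ∈ Finset.range (N+1), A k := by
    ext ω
    simp only [Set.mem_setOf_eq, Set.mem_iUnion, Finset.mem_range]
    constructor
    · rintro hex
      have hex' : ∃ k, k ≤ N ∧ x < pS k ω := hex
      classical
      let k0 := Nat.find hex'
      have hk0 := Nat.find_spec hex'
      refine ⟨k0, by omega, hk0.2, ?_⟩
      intro j hj
      by_contra hcon
      push_neg at hcon
      exact Nat.find_min hex' hj ⟨by omega, hcon⟩
    · rintro ⟨k, hk, h1, _⟩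
      exact ⟨k, by omega, h1⟩
  rw [hcover]
  have hpd : (↑(Finset.range (N+1)) : Set ℕ).PairwiseDisjoint A :=
    fun k _ k' _ h => hAdisj k k' h
  rw [measure_biUnion_finset hpd (fun k _ => hAmeas k)]
  calc ∑ k ∈ Finset.range (N+1), P (A k)
      ≤ ∑ k ∈ Finset.range (N+1), 2 * P (A k ∩ {ω | 0 ≤ pT k ω}) :=
        Finset.sum_le_sum (fun k _ => key k)
    _ = 2 * ∑ k ∈ Finset.range (N+1), P (A k ∩ {ω | 0 ≤ pT k ω}) := by
        rw [Finset.mul_sum]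
    _ ≤ 2 * P {ω | x < ∑ i, X i ω} := by
        apply mul_le_mul_right
        have hpd2 : (↑(Finset.range (N+1)) : Set ℕ).PairwiseDisjoint
            (fun k => A k ∩ {ω | 0 ≤ pT k ω}) :=
          fun k hk k' hk' h => ((hAdisj k k' h).mono (Set.inter_subset_left) (Set.inter_subset_left))
        rw [← measure_biUnion_finset hpd2
          (fun k _ => (hAmeas k).inter (measurableSet_le measurable_const (hmeasT k)))]
        apply measure_mono
        intro ω hω
        simp only [Set.mem_iUnion] at hω
        obtain ⟨k, _, ⟨h1, _⟩, h2⟩ := hω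
        simp only [Set.mem_setOf_eq] at h1 h2 ⊢
        have := htot k ω
        linarith

lemma sum_filter_lt_succ {N k : ℕ} (hk : k < N) (f : Fin N → ℝ) :
    ∑ i ∈ Finset.univ.filter (fun i : Fin N => (i:ℕ) < k+1), f i
      = (∑ i ∈ Finset.univ.filter (fun i : Fin N => (i:ℕ) < k), f i) + f ⟨k, hk⟩ := by
  have h : Finset.univ.filter (fun i : Fin N => (i:ℕ) < k+1)
      = insert (⟨k, hk⟩ : Fin N) (Finset.univ.filter (fun i : Fin N => (i:ℕ) < k)) := by
    ext i
    simp only [Finset.mem_filter, Finset.mem_univ, true_and, Finset.mem_insert, Fin.ext_iff]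
    omega
  rw [h, Finset.sum_insert (by simp)]
  ring

theorem brownian_sup_tail_bound
    {Ω : Type*} [MeasurableSpace Ω] (P : Measure Ω) [IsProbabilityMeasure P]
    (W : Ω → ℝ → ℝ)
    (h0 : ∀ ω, W ω 0 = 0)
    (hcont : ∀ ω, ContinuousOn (W ω) (Set.Icc (0:ℝ) 1))
    (hmeas : ∀ t ∈ Set.Icc (0:ℝ) 1, Measurable (fun ω => W ω t))
    (hgauss : ∀ s t : ℝ, 0 ≤ s → s ≤ t → t ≤ 1 →
      Measure.map (fun ω => W ω t - W ω s) P = gaussianReal 0 (Real.toNNReal (t - s)))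
    (hindep : ∀ n : ℕ, ∀ t : Fin (n + 1) → ℝ, Monotone t →
      0 ≤ t 0 → t (Fin.last n) ≤ 1 →
      iIndepFun
        (fun i : Fin n => fun ω => W ω (t i.succ) - W ω (t i.castSucc)) P) :
    ∀ x : ℝ, 0 < x →
      P {ω | x < ⨆ t : Set.Icc (0:ℝ) 1, |W ω (t : ℝ)|}
        ≤ 4 * P {ω | x / 2 < |W ω 1|} := by
  intro x hx
  set E : ℕ → Set Ω := fun n =>
    ⋃ k ∈ Finset.range (2^n + 1), {ω | x < |W ω ((k : ℝ) / 2^n)|} with hE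
  have hgrid : ∀ n : ℕ, ∀ k : ℕ, k ≤ 2^n → (k : ℝ) / 2^n ∈ Set.Icc (0:ℝ) 1 := by
    intro n k hk
    constructor
    · positivity
    · rw [div_le_one (by positivity)]
      exact_mod_cast hk
  -- key per-grid bound
  have hkey : ∀ n : ℕ, P (E n) ≤ 4 * P {ω | x / 2 < |W ω 1|} := by
    intro n
    have hNpos : (0:ℕ) < 2^n := Nat.pow_pos (n := n) (by norm_num)
    have hNR : (0:ℝ) < (2^n : ℕ) := by exact_mod_cast hNpos
    set N : ℕ := 2^n with hN
    set t : Fin (N + 1) → ℝ := fun i => ((i:ℕ) : ℝ) / (N:ℝ) with ht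
    have htmem : ∀ j : Fin (N+1), t j ∈ Set.Icc (0:ℝ) 1 := by
      intro j
      have := hgrid n (j:ℕ) (Nat.lt_succ_iff.mp j.isLt)
      simpa [ht, hN] using this
    have ht_mono : Monotone t := by
      intro i j hij
      have hij' : ((i:ℕ):ℝ) ≤ ((j:ℕ):ℝ) := by exact_mod_cast hij
      show ((i:ℕ):ℝ) / (N:ℝ) ≤ ((j:ℕ):ℝ) / (N:ℝ)
      gcongr
    have ht0 : t 0 = 0 := by simp [ht]
    have htlast : t (Fin.last N) = 1 := by
      simp only [ht, Fin.val_last]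
      field_simp
    set X : Fin N → Ω → ℝ := fun i ω => W ω (t i.succ) - W ω (t i.castSucc) with hXdef
    have hiX : iIndepFun X P :=
      hindep N t ht_mono (by rw [ht0]) (by rw [htlast])
    have hmX : ∀ i, Measurable (X i) :=
      fun i => (hmeas _ (htmem i.succ)).sub (hmeas _ (htmem i.castSucc))
    -- telescoping
    have htel : ∀ k : ℕ, k ≤ N → ∀ ω,
        (∑ i ∈ Finset.univ.filter (fun i : Fin N => (i:ℕ) < k), X i ω)
          = W ω ((k:ℝ)/(N:ℝ)) := by
      intro k hk
      induction k with
      | zero =>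
        intro ω
        have hempty : Finset.univ.filter (fun i : Fin N => (i:ℕ) < 0) = ∅ := by
          ext i; simp
        simp [hempty, h0 ω]
      | succ k ih =>
        intro ω
        have hkN : k < N := hk
        rw [sum_filter_lt_succ hkN, ih (le_of_lt hkN) ω]
        have h1 : t (Fin.succ ⟨k, hkN⟩) = ((k:ℝ)+1)/(N:ℝ) := by
          simp only [ht, Fin.val_succ]
          push_cast; ring
        have h2 : t (Fin.castSucc ⟨k, hkN⟩) = (k:ℝ)/(N:ℝ) := by
          simp only [ht, Fin.coe_castSucc]
        show W ω ((k:ℝ)/(N:ℝ)) + (W ω (t (Fin.succ ⟨k, hkN⟩)) - W ω (t (Fin.castSucc ⟨k, hkN⟩)))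
            = W ω (((k+1:ℕ):ℝ)/(N:ℝ))
        rw [h1, h2]
        push_cast
        ring_nf
    have htot : ∀ ω, (∑ i, X i ω) = W ω 1 := by
      intro ω
      have hfull : Finset.univ.filter (fun i : Fin N => (i:ℕ) < N) = Finset.univ := by
        ext i; simp [i.isLt]
      have := htel N le_rfl ω
      rw [hfull] at this
      rw [this, div_self (ne_of_gt hNR)]
    have htail : ∀ k : ℕ, k ≤ N → ∀ ω,
        (∑ i ∈ Finset.univ.filter (fun i : Fin N => k ≤ (i:ℕ)), X i ω)
          = W ω 1 - W ω ((k:ℝ)/(N:ℝ)) := by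
      intro k hk ω
      have hsplit : (∑ i ∈ Finset.univ.filter (fun i : Fin N => (i:ℕ) < k), X i ω)
          + (∑ i ∈ Finset.univ.filter (fun i : Fin N => k ≤ (i:ℕ)), X i ω) = ∑ i, X i ω := by
        have h : (Finset.univ.filter fun i : Fin N => k ≤ (i:ℕ))
            = Finset.univ.filter fun i : Fin N => ¬ ((i:ℕ) < k) := by
          ext i; simp [not_lt]
        rw [h]
        exact Finset.sum_filter_add_sum_filter_not _ _ _
      have h1 := htel k hk ω
      have h2 := htot ω
      linarith
    -- symmetry hypotheses
    have hmemk : ∀ k : ℕ, k ≤ N → (k:ℝ)/(N:ℝ) ∈ Set.Icc (0:ℝ) 1 := by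
      intro k hk
      simpa [hN] using hgrid n k hk
    have hWmeas : ∀ k : ℕ, k ≤ N → Measurable (fun ω => W ω 1 - W ω ((k:ℝ)/(N:ℝ))) :=
      fun k hk => (hmeas 1 (by simp)).sub (hmeas _ (hmemk k hk))
    have hmap : ∀ k : ℕ, k ≤ N →
        Measure.map (fun ω => W ω 1 - W ω ((k:ℝ)/(N:ℝ))) P
          = gaussianReal 0 (Real.toNNReal (1 - (k:ℝ)/(N:ℝ))) :=
      fun k hk => hgauss ((k:ℝ)/(N:ℝ)) 1 (hmemk k hk).1 (hmemk k hk).2 le_rfl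
    have hemptyT : ∀ k : ℕ, N < k →
        Finset.univ.filter (fun i : Fin N => k ≤ (i:ℕ)) = ∅ := by
      intro k hk
      ext i
      simp only [Finset.mem_filter, Finset.mem_univ, true_and, Finset.notMem_empty, iff_false]
      have := i.isLt
      omega
    have hsymX : ∀ k : ℕ,
        P {ω | (∑ i ∈ Finset.univ.filter (fun i : Fin N => k ≤ (i:ℕ)), X i ω) < 0} ≤ 1/2 := by
      intro k
      by_cases hk : k ≤ N
      · have hset : {ω | (∑ i ∈ Finset.univ.filter (fun i : Fin N => k ≤ (i:ℕ)), X i ω) < 0}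
            = (fun ω => W ω 1 - W ω ((k:ℝ)/(N:ℝ))) ⁻¹' (Set.Iio 0) := by
          ext ω
          simp only [Set.mem_setOf_eq, Set.mem_preimage, Set.mem_Iio]
          rw [htail k hk ω]
        rw [hset, ← Measure.map_apply (hWmeas k hk) measurableSet_Iio, hmap k hk]
        exact gauss_Iio_le_half _
      · rw [hemptyT k (by omega)]
        simp
    set Y : Fin N → Ω → ℝ := fun i ω => -(X i ω) with hYdef
    have hiY : iIndepFun Y P :=
      hiX.comp (fun _ => fun y : ℝ => -y) (fun _ => measurable_neg)
    have hmY : ∀ i, Measurable (Y i) := fun i => (hmX i).neg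
    have hsymY : ∀ k : ℕ,
        P {ω | (∑ i ∈ Finset.univ.filter (fun i : Fin N => k ≤ (i:ℕ)), Y i ω) < 0} ≤ 1/2 := by
      intro k
      by_cases hk : k ≤ N
      · have hset : {ω | (∑ i ∈ Finset.univ.filter (fun i : Fin N => k ≤ (i:ℕ)), Y i ω) < 0}
            = (fun ω => W ω 1 - W ω ((k:ℝ)/(N:ℝ))) ⁻¹' (Set.Ioi 0) := by
          ext ω
          simp only [hYdef, Finset.sum_neg_distrib, Set.mem_setOf_eq, Set.mem_preimage,
            Set.mem_Ioi, neg_lt_zero]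
          rw [htail k hk ω]
        rw [hset, ← Measure.map_apply (hWmeas k hk) measurableSet_Ioi, hmap k hk]
        exact gauss_Ioi_le_half _
      · rw [hemptyT k (by omega)]
        simp
    have hlevX := levy_aux P N X hmX hiX hsymX x
    have hlevY := levy_aux P N Y hmY hiY hsymY x
    -- E n ⊆ MX ∪ MY
    have hsub : E n ⊆
        {ω | ∃ k, k ≤ N ∧ x < ∑ i ∈ Finset.univ.filter (fun i : Fin N => (i:ℕ) < k), X i ω}
        ∪ {ω | ∃ k, k ≤ N ∧ x < ∑ i ∈ Finset.univ.filter (fun i : Fin N => (i:ℕ) < k), Y i ω} := by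
      intro ω hω
      simp only [hE, Set.mem_iUnion, Finset.mem_range, Set.mem_setOf_eq] at hω
      obtain ⟨k, hk, hxk⟩ := hω
      have hkN : k ≤ N := by omega
      rcases lt_abs.mp hxk with h | h
      · left
        exact ⟨k, hkN, by rw [htel k hkN ω]; exact_mod_cast h⟩
      · right
        refine ⟨k, hkN, ?_⟩
        have : (∑ i ∈ Finset.univ.filter (fun i : Fin N => (i:ℕ) < k), Y i ω)
            = - W ω ((k:ℝ)/(N:ℝ)) := by
          simp only [hYdef, Finset.sum_neg_distrib]
          rw [htel k hkN ω]
        rw [this]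
        exact_mod_cast h
    have htotY : ∀ ω, (∑ i, Y i ω) = - W ω 1 := by
      intro ω
      simp only [hYdef, Finset.sum_neg_distrib]
      rw [htot ω]
    -- combine
    have hA : {ω | x < ∑ i, X i ω} = {ω | x < W ω 1} := by
      ext ω
      simp only [Set.mem_setOf_eq]
      rw [htot ω]
    have hB : {ω | x < ∑ i, Y i ω} = {ω | W ω 1 < -x} := by
      ext ω
      simp only [Set.mem_setOf_eq]
      rw [htotY ω]
      constructor <;> intro h <;> linarith
    have habs : {ω | x < W ω 1} ∪ {ω | W ω 1 < -x} = {ω | x < |W ω 1|} := by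
      ext ω
      simp only [Set.mem_union, Set.mem_setOf_eq, lt_abs]
      constructor
      · rintro (h | h)
        · exact Or.inl h
        · exact Or.inr (by linarith)
      · rintro (h | h)
        · exact Or.inl h
        · exact Or.inr (by linarith)
    have hdisj : Disjoint {ω | x < W ω 1} {ω | W ω 1 < -x} := by
      apply Set.disjoint_left.mpr
      intro ω h1 h2
      simp only [Set.mem_setOf_eq] at h1 h2
      linarith
    have hPsum : P {ω | x < W ω 1} + P {ω | W ω 1 < -x} = P {ω | x < |W ω 1|} := by
      rw [← habs]
      exact (measure_union hdisj (measurableSet_lt (hmeas 1 (by simp)) measurable_const)).symm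
    calc P (E n) ≤ P ({ω | ∃ k, k ≤ N ∧ x < ∑ i ∈ Finset.univ.filter (fun i : Fin N => (i:ℕ) < k), X i ω}
          ∪ {ω | ∃ k, k ≤ N ∧ x < ∑ i ∈ Finset.univ.filter (fun i : Fin N => (i:ℕ) < k), Y i ω}) :=
        measure_mono hsub
      _ ≤ P {ω | ∃ k, k ≤ N ∧ x < ∑ i ∈ Finset.univ.filter (fun i : Fin N => (i:ℕ) < k), X i ω}
          + P {ω | ∃ k, k ≤ N ∧ x < ∑ i ∈ Finset.univ.filter (fun i : Fin N => (i:ℕ) < k), Y i ω} :=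
        measure_union_le _ _
      _ ≤ 2 * P {ω | x < ∑ i, X i ω} + 2 * P {ω | x < ∑ i, Y i ω} := add_le_add hlevX hlevY
      _ = 2 * (P {ω | x < W ω 1} + P {ω | W ω 1 < -x}) := by rw [hA, hB]; ring
      _ = 2 * P {ω | x < |W ω 1|} := by rw [hPsum]
      _ ≤ 2 * P {ω | x / 2 < |W ω 1|} := by
          apply mul_le_mul_right
          apply measure_mono
          intro ω h
          simp only [Set.mem_setOf_eq] at h ⊢
          linarith
      _ ≤ 4 * P {ω | x / 2 < |W ω 1|} := by
          apply mul_le_mul_left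
          norm_num
  -- union identity
  have hmonoE : Monotone E := by
    apply monotone_nat_of_le_succ
    intro n ω hω
    simp only [hE, Set.mem_iUnion, Finset.mem_range, Set.mem_setOf_eq] at hω ⊢
    obtain ⟨k, hk, hxk⟩ := hω
    refine ⟨2*k, by omega, ?_⟩
    have hval : ((2*k : ℕ) : ℝ) / (2:ℝ)^(n+1) = (k:ℝ) / 2^n := by
      push_cast
      rw [pow_succ]
      field_simp
    rw [hval]
    exact hxk
  have hsup_eq : {ω | x < ⨆ t : Set.Icc (0:ℝ) 1, |W ω (t : ℝ)|} = ⋃ n, E n := by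
    ext ω
    haveI : Nonempty (Set.Icc (0:ℝ) 1) := ⟨⟨0, by norm_num⟩⟩
    have hbdd : BddAbove (Set.range (fun t : Set.Icc (0:ℝ) 1 => |W ω (t:ℝ)|)) := by
      have hc : ContinuousOn (fun s => |W ω s|) (Set.Icc (0:ℝ) 1) := (hcont ω).abs
      have hcompact := (isCompact_Icc.image_of_continuousOn hc).bddAbove
      have hre : Set.range (fun t : Set.Icc (0:ℝ) 1 => |W ω (t:ℝ)|)
          = (fun s => |W ω s|) '' (Set.Icc (0:ℝ) 1) := by
        ext y
        simp only [Set.mem_range, Set.mem_image, Subtype.exists, exists_prop]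
      rwa [hre]
    simp only [Set.mem_setOf_eq, Set.mem_iUnion]
    constructor
    · intro hsup
      have hex : ∃ s : Set.Icc (0:ℝ) 1, x < |W ω (s:ℝ)| := by
        by_contra hcon
        push_neg at hcon
        exact absurd (ciSup_le hcon) (not_le.mpr hsup)
      obtain ⟨⟨s, hs⟩, hxs⟩ := hex
      have hcw : ContinuousWithinAt (fun u => |W ω u|) (Set.Icc (0:ℝ) 1) s :=
        ((hcont ω).abs) s hs
      have hev : (fun u => |W ω u|) ⁻¹' (Set.Ioi x) ∈ nhdsWithin s (Set.Icc (0:ℝ) 1) :=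
        hcw (Ioi_mem_nhds hxs)
      rw [Metric.mem_nhdsWithin_iff] at hev
      obtain ⟨ε, hε, hball⟩ := hev
      obtain ⟨m, hm⟩ := exists_pow_lt_of_lt_one hε (by norm_num : (1:ℝ)/2 < 1)
      have h2m : (0:ℝ) < 2^m := by positivity
      set k : ℕ := (⌊s * 2^m⌋).toNat with hkdef
      have hs0 : (0:ℝ) ≤ s := hs.1
      have hs1 : s ≤ 1 := hs.2
      have hfl_nonneg : (0:ℤ) ≤ ⌊s * 2^m⌋ := Int.floor_nonneg.mpr (mul_nonneg hs0 h2m.le)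
      have hkcast : (k:ℝ) = ((⌊s * 2^m⌋ : ℤ) : ℝ) := by
        rw [hkdef]
        exact_mod_cast congrArg (Int.cast : ℤ → ℝ) (Int.toNat_of_nonneg hfl_nonneg)
      have hk_le : (k:ℝ) ≤ s * 2^m := by rw [hkcast]; exact Int.floor_le _
      have hk_gt : s * 2^m < (k:ℝ) + 1 := by rw [hkcast]; exact Int.lt_floor_add_one _
      have hkN : k ≤ 2^m := by
        have h2 : (k:ℝ) ≤ ((2^m : ℕ) : ℝ) := by
          push_cast
          nlinarith
        exact_mod_cast h2
      set u : ℝ := (k:ℝ)/2^m with hu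
      have hu_le : u ≤ s := by rw [hu, div_le_iff₀ h2m]; linarith
      have hsplit2 : ((k:ℝ)+1)/2^m = (k:ℝ)/2^m + 1/2^m := add_div _ _ _
      have h12 : (1/2:ℝ)^m = 1/2^m := by rw [div_pow]; norm_num
      have hu_gt : s - u < (1/2:ℝ)^m := by
        have hlt : s < ((k:ℝ)+1)/2^m := by rw [lt_div_iff₀ h2m]; linarith
        rw [hu, h12]
        linarith [hsplit2]
      have humem : u ∈ Metric.ball s ε ∩ Set.Icc (0:ℝ) 1 := by
        constructor
        · rw [Metric.mem_ball, Real.dist_eq, abs_sub_lt_iff]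
          constructor
          · linarith
          · linarith
        · exact hgrid m k hkN
      have hx' := hball humem
      simp only [Set.mem_preimage, Set.mem_Ioi] at hx'
      refine ⟨m, ?_⟩
      simp only [hE, Set.mem_iUnion, Finset.mem_range, Set.mem_setOf_eq]
      exact ⟨k, by omega, hx'⟩
    · rintro ⟨m, hm⟩
      simp only [hE, Set.mem_iUnion, Finset.mem_range, Set.mem_setOf_eq] at hm
      obtain ⟨k, hk, hxk⟩ := hm
      have hmem := hgrid m k (by omega)
      calc x < |W ω ((k:ℝ)/2^m)| := hxk
        _ ≤ ⨆ t : Set.Icc (0:ℝ) 1, |W ω (t:ℝ)| :=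
          le_ciSup hbdd ⟨(k:ℝ)/2^m, hmem⟩
  rw [hsup_eq, Directed.measure_iUnion hmonoE.directed_le]
  exact iSup_le hkey
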